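/- Let d be a real number. If d ≥ 2, then e^{π√d} − e^{π√(d−1)} > e^{π√d}/√d. -/

import Mathlib

set_option maxHeartbeats 1000000

lemma exp_pi_sqrt_gap_aux (v : ℝ) (hv : 2.414 ≤ v) :
    (Real.pi * v ^ 2 + Real.pi ^ 2 * v / 2 + Real.pi ^ 3 / 6) * (v - 1) ^ 2 > 2 * v ^ 4 := by
  have hpi : (3.1415 : ℝ) ≤ Real.pi := by
    have := Real.pi_gt_d6; linarith
  have hp2 : (3.1415 : ℝ) ^ 2 ≤ Real.pi ^ 2 := by nlinarith
  have hp3 : (3.1415 : ℝ) ^ 3 ≤ Real.pi ^ 3 := by nlinarith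
  have hv1 : (0:ℝ) ≤ (v - 1) ^ 2 := sq_nonneg _
  have h1 : (3.1415 * v ^ 2 + 3.1415 ^ 2 * v / 2 + 3.1415 ^ 3 / 6) * (v - 1) ^ 2 > 2 * v ^ 4 := by
    nlinarith [sq_nonneg (v - 2.414), sq_nonneg (v - 1), mul_nonneg (sq_nonneg (v - 2.414)) (sq_nonneg (v - 1)), mul_nonneg (sub_nonneg.mpr hv) (sq_nonneg (v - 1)), sq_nonneg v, mul_nonneg (sub_nonneg.mpr hv) (sq_nonneg v)]
  nlinarith [mul_le_mul_of_nonneg_right hp2 hv1, mul_le_mul_of_nonneg_right hp3 hv1,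
    mul_le_mul_of_nonneg_right (mul_le_mul_of_nonneg_left hpi (sq_nonneg v)) hv1,
    mul_nonneg (sub_nonneg.mpr hv) hv1]

/-- **Lemma.** Let `d` be a real number. If `d ≥ 2`, then
`e^{π√d} − e^{π√(d−1)} > e^{π√d}/√d`. -/
theorem exp_pi_sqrt_gap (d : ℝ) (hd : 2 ≤ d) :
    Real.exp (Real.pi * Real.sqrt d) - Real.exp (Real.pi * Real.sqrt (d - 1)) >
      Real.exp (Real.pi * Real.sqrt d) / Real.sqrt d := by
  set s := Real.sqrt d with hs
  set t := Real.sqrt (d - 1) with ht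
  have hd1 : (1:ℝ) ≤ d - 1 := by linarith
  have hs2 : s ^ 2 = d := Real.sq_sqrt (by linarith)
  have ht2 : t ^ 2 = d - 1 := Real.sq_sqrt (by linarith)
  have ht0 : 0 ≤ t := Real.sqrt_nonneg _
  have ht1 : 1 ≤ t := by nlinarith
  have hts : t < s := by
    apply Real.sqrt_lt_sqrt (by linarith); linarith
  have hslb : (1.414:ℝ) ≤ s := by
    nlinarith [Real.sqrt_nonneg d]
  set x := Real.pi * (s - t) with hx
  have hx0 : 0 < x := mul_pos Real.pi_pos (by linarith)
  have hcube : 1 + x + x ^ 2 / 2 + x ^ 3 / 6 ≤ Real.exp x := by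
    have h := Real.sum_le_exp_of_nonneg hx0.le 4
    simp [Finset.sum_range_succ, Nat.factorial] at h
    linarith
  set v := s + t with hv
  have hv0 : (0:ℝ) < v := by positivity
  have hvlb : (2.414:ℝ) ≤ v := by linarith
  have hst : (s - t) * v = 1 := by rw [hv]; nlinarith
  have hx' : x = Real.pi / v := by
    rw [hx, eq_div_iff (by linarith)]
    nlinarith
  have hs' : s = (v ^ 2 + 1) / (2 * v) := by
    rw [eq_div_iff (by positivity), hv]
    nlinarith
  have key := exp_pi_sqrt_gap_aux v hvlb
  have hkey : (1 + x + x ^ 2 / 2 + x ^ 3 / 6) * (s - 1) > s := by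
    have heq : (1 + x + x ^ 2 / 2 + x ^ 3 / 6) * (s - 1) - s =
        ((Real.pi * v ^ 2 + Real.pi ^ 2 * v / 2 + Real.pi ^ 3 / 6) * (v - 1) ^ 2 - 2 * v ^ 4)
          / (2 * v ^ 4) := by
      rw [hx', hs']
      field_simp
      ring
    have hpos : 0 < ((Real.pi * v ^ 2 + Real.pi ^ 2 * v / 2 + Real.pi ^ 3 / 6) * (v - 1) ^ 2
        - 2 * v ^ 4) / (2 * v ^ 4) := by
      apply div_pos (by linarith) (by positivity)
    linarith
  have hX : Real.exp x * (s - 1) > s := by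
    nlinarith [Real.exp_pos x]
  have hsplit : Real.exp (Real.pi * s) = Real.exp (Real.pi * t) * Real.exp x := by
    rw [← Real.exp_add, hx]; ring_nf
  rw [gt_iff_lt, div_lt_iff₀ (by linarith : (0:ℝ) < s), hsplit]
  nlinarith [Real.exp_pos (Real.pi * t)]
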